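/- Let 1 < r < q < ∞, 0 < ϑ < 1/2, s = (q/r)' = q/(q-r), and u = 1 + C·ϑ where C = (q-r)/(r(q-1)+q(r-1)). Then r' - q'u·((rs(1+ϑ))/(q'u))' ≥ c(q,r)·ϑ for some constant c(q,r) > 0 depending only on q and r. -/
import Mathlib


/-- The Hölder conjugate `x' = x/(x-1)`. -/
noncomputable def holderConj (x : ℝ) : ℝ := x / (x - 1)

set_option maxHeartbeats 1600000 in
/-- Let `1 < r < q < ∞`, `0 < ϑ < 1/2`, `s = (q/r)' = q/(q-r)` and
`u = 1 + Cϑ` with `C = (q-r)/(r(q-1)+q(r-1))`.  Then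
`r' - q'u·((rs(1+ϑ))/(q'u))' ≥ c(q,r)·ϑ` for some constant `c(q,r) > 0`
depending only on `q` and `r`. -/
theorem stmt1 (q r : ℝ) (hr : 1 < r) (hq : r < q) :
    ∃ c : ℝ, 0 < c ∧ ∀ ϑ : ℝ, 0 < ϑ → ϑ < 1 / 2 →
      holderConj r -
        holderConj q * (1 + (q - r) / (r * (q - 1) + q * (r - 1)) * ϑ) *
          holderConj ((r * (q / (q - r)) * (1 + ϑ)) /
            (holderConj q * (1 + (q - r) / (r * (q - 1) + q * (r - 1)) * ϑ)))
        ≥ c * ϑ := by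
  have hq1 : (1:ℝ) < q := hr.trans hq
  have hqr : (0:ℝ) < q - r := by linarith
  have hr1 : (0:ℝ) < r - 1 := by linarith
  have hq1' : (0:ℝ) < q - 1 := by linarith
  have hr0 : (0:ℝ) < r := by linarith
  have hq0 : (0:ℝ) < q := by linarith
  have hD : (0:ℝ) < r * (q - 1) + q * (r - 1) := by positivity
  refine ⟨(q - r) / (16 * (r - 1) * (q - 1)), by positivity, ?_⟩
  intro ϑ h0 h2
  have hCpos : 0 < (q - r) / (r * (q - 1) + q * (r - 1)) := by positivity
  have hupos : 0 < 1 + (q - r) / (r * (q - 1) + q * (r - 1)) * ϑ := by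
    nlinarith [mul_pos hCpos h0]
  set u := 1 + (q - r) / (r * (q - 1) + q * (r - 1)) * ϑ with hu
  have hqconj : holderConj q = q / (q - 1) := rfl
  set B := holderConj q * u with hBdef
  have hBpos : 0 < B := by
    rw [hBdef, hqconj]; exact mul_pos (by positivity) hupos
  set A := r * (q / (q - r)) * (1 + ϑ) with hAdef
  have hApos : 0 < A := by rw [hAdef]; positivity
  set M := (r * (q - 1) + q * (r - 1)) + ϑ * ((q - r) + 2 * r * (q - 1)) with hM
  have hMpos : 0 < M := by
    rw [hM]; nlinarith [mul_pos h0 hqr, mul_pos h0 (mul_pos hr0 hq1')]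
  have hABeq : A - B = q ^ 2 * (r - 1) * M /
      ((q - r) * (q - 1) * (r * (q - 1) + q * (r - 1))) := by
    rw [hAdef, hBdef, hqconj, hu, hM]
    field_simp
    ring
  have hABpos : 0 < A - B := by rw [hABeq]; positivity
  have hconj : holderConj (A / B) = A / (A - B) := by
    unfold holderConj
    rw [show A / B - 1 = (A - B) / B by field_simp]
    rw [div_div_div_eq, mul_comm A B, mul_div_mul_left _ _ hBpos.ne']
  have hrconj : holderConj r = r / (r - 1) := rfl
  rw [hconj, hrconj]
  have hE : r / (r - 1) - B * (A / (A - B))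
      = r * (q - r) * ϑ * (1 - ϑ) / ((r - 1) * M) := by
    rw [hABeq, hAdef, hBdef, hqconj, hu, hM]
    field_simp
    ring
  rw [hE, ge_iff_le, le_div_iff₀ (by positivity)]
  rw [div_mul_eq_mul_div, div_mul_eq_mul_div, div_le_iff₀ (by positivity)]
  have hpos : 0 < (q - r) * ϑ * (r - 1) := by positivity
  have h1 : M ≤ 16 * r * (q - 1) * (1 - ϑ) := by
    rw [hM]
    nlinarith [mul_pos hr0 hq1',
      mul_nonneg (by linarith : (0:ℝ) ≤ 1 / 2 - ϑ)
        (by nlinarith [mul_pos hr0 hq1'] : (0:ℝ) ≤ q - r + 2 * r * (q - 1)),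
      mul_pos (mul_pos hr0 hq1') h0]
  nlinarith [mul_le_mul_of_nonneg_left h1 hpos.le]
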